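/- arXiv:0706.4134 — 4 statements merged into one kernel-verified Lean document; each statement's English description precedes it below -/
import Mathlib

section
/- Let n ≥ 1, k ≥ 0 be integers and let W = {w_0 = 0, w_1, …, w_{n+k}} ⊂ ℤ^n be n+k+1 integer vectors with w_0 = 0, such that W spans ℤ^n mod 2. Let β_1, …, β_k ∈ ℤ^{n+k} be a ℤ-basis of the lattice of linear relations {β = (b_1,…,b_{n+k}) ∈ ℤ^{n+k} : ∑_{i=1}^{n+k} b_i·w_i = 0}, and let Φ_W : (ℝ∖{0})^n → (ℝ∖{0})^{n+k} be the map Φ_W(x) = (x^{w_1}, …, x^{w_{n+k}}). Then the image of Φ_W equals the set {z ∈ (ℝ∖{0})^{n+k} : z^{β_1} = z^{β_2} = ⋯ = z^{β_k} = 1}, where z^β := ∏_{i=1}^{n+k} z_i^{b_i}. -/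
set_option linter.unusedSectionVars false
set_option maxHeartbeats 1000000

section GaleAux

variable {ι : Type*} [Fintype ι] [DecidableEq ι]

lemma gale_psi_add {z : ι → ℝ} (hz : ∀ i, z i ≠ 0) (a b : ι → ℤ) :
    ∏ i, z i ^ ((a + b) i) = (∏ i, z i ^ a i) * ∏ i, z i ^ b i := by
  rw [← Finset.prod_mul_distrib]
  exact Finset.prod_congr rfl fun i _ => by
    simpa using zpow_add₀ (hz i) (a i) (b i)

lemma gale_psi_zsmul {z : ι → ℝ} (m : ℤ) (b : ι → ℤ) :
    ∏ i, z i ^ ((m • b) i) = (∏ i, z i ^ b i) ^ m := by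
  rw [← Finset.prod_zpow]
  exact Finset.prod_congr rfl fun i _ => by
    simp [smul_eq_mul, mul_comm m (b i), zpow_mul]

lemma gale_psi_zero {z : ι → ℝ} : ∏ i, z i ^ ((0 : ι → ℤ) i) = 1 := by simp

lemma gale_psi_single {z : ι → ℝ} (a : ι) (m : ℤ) :
    ∏ i, z i ^ ((Pi.single a m : ι → ℤ) i) = z a ^ m := by
  rw [Finset.prod_eq_single a (fun i _ hi => by simp [Pi.single_eq_of_ne hi]) (by simp)]
  simp

lemma gale_psi_neg {z : ι → ℝ} (b : ι → ℤ) :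
    ∏ i, z i ^ ((-b) i) = (∏ i, z i ^ b i)⁻¹ := by
  have h : (-b) = (-1 : ℤ) • b := by funext i; simp
  rw [h, gale_psi_zsmul, zpow_neg, zpow_one]

lemma gale_psi_sum {z : ι → ℝ} (hz : ∀ i, z i ≠ 0) {κ : Type*} (t : Finset κ)
    (f : κ → (ι → ℤ)) :
    ∏ i, z i ^ ((∑ s ∈ t, f s) i) = ∏ s ∈ t, ∏ i, z i ^ (f s i) := by
  classical
  induction t using Finset.cons_induction with
  | empty => simp
  | cons a t ha ih => rw [Finset.sum_cons, Finset.prod_cons, gale_psi_add hz, ih]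

lemma gale_psi_span {z : ι → ℝ} (hz : ∀ i, z i ≠ 0) {S : Set (ι → ℤ)}
    (hS : ∀ b ∈ S, ∏ i, z i ^ b i = 1) {b : ι → ℤ}
    (hb : b ∈ Submodule.span ℤ S) : ∏ i, z i ^ b i = 1 := by
  induction hb using Submodule.span_induction with
  | mem x hx => exact hS x hx
  | zero => exact gale_psi_zero
  | add x y _ _ hx hy => rw [gale_psi_add hz, hx, hy, one_mul]
  | smul m x _ hx => rw [gale_psi_zsmul, hx, one_zpow]

end GaleAux

noncomputable def galeChi (t : ZMod 2) : ℝ := if t = 0 then 1 else -1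

lemma gale_zmod2_cases (x : ZMod 2) : x = 0 ∨ x = 1 := by revert x; decide

lemma galeChi_add (a b : ZMod 2) : galeChi (a + b) = galeChi a * galeChi b := by
  rcases gale_zmod2_cases a with ha | ha <;> rcases gale_zmod2_cases b with hb | hb <;>
    subst ha <;> subst hb <;> norm_num [galeChi] <;> decide

lemma galeChi_sum {κ : Type*} (t : Finset κ) (f : κ → ZMod 2) :
    galeChi (∑ s ∈ t, f s) = ∏ s ∈ t, galeChi (f s) := by
  classical
  induction t using Finset.cons_induction with
  | empty => simp [galeChi]
  | cons a t ha ih => rw [Finset.sum_cons, Finset.prod_cons, galeChi_add, ih]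

lemma gale_sign_zpow (σ0 : ZMod 2) (m : ℤ) :
    (if σ0 = 0 then (1:ℝ) else -1) ^ m = galeChi ((m : ZMod 2) * σ0) := by
  rcases gale_zmod2_cases σ0 with h | h <;> subst h
  · simp [galeChi]
  · have h1 : (1 : ZMod 2) ≠ 0 := by decide
    simp only [if_neg h1, mul_one, galeChi]
    rcases Int.even_or_odd m with he | ho
    · rw [he.neg_one_zpow, if_pos]
      rw [ZMod.intCast_zmod_eq_zero_iff_dvd]
      exact_mod_cast he.two_dvd
    · rw [ho.neg_one_zpow, if_neg]
      rw [ZMod.intCast_zmod_eq_zero_iff_dvd]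
      intro h2
      obtain ⟨c, hc⟩ := (by exact_mod_cast h2 : (2:ℤ) ∣ m)
      exact (Int.not_even_iff_odd.2 ho) ⟨c, by omega⟩

lemma gale_exp_zpow (t : ℝ) (m : ℤ) : Real.exp t ^ m = Real.exp (m * t) := by
  rw [← Real.rpow_intCast, Real.rpow_def_of_pos (Real.exp_pos t), Real.log_exp, mul_comm]

lemma gale_key_prod {n : ℕ} (σ : Fin n → ZMod 2) (y : Fin n → ℝ) (v : Fin n → ℤ) :
    ∏ j, ((if σ j = 0 then (1:ℝ) else -1) * Real.exp (y j)) ^ v j =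
      galeChi (∑ j, (v j : ZMod 2) * σ j) * Real.exp (∑ j, (v j : ℝ) * y j) := by
  rw [galeChi_sum, Real.exp_sum, ← Finset.prod_mul_distrib]
  refine Finset.prod_congr rfl fun j _ => ?_
  rw [mul_zpow, gale_sign_zpow, gale_exp_zpow]

lemma gale_zpow_odd_inj {a b : ℝ} {d : ℤ} (hd : Odd d) (h : a ^ d = b ^ d) : a = b := by
  have habs : a ^ (d.natAbs : ℤ) = b ^ (d.natAbs : ℤ) := by
    rcases Int.natAbs_eq d with h' | h'
    · rw [← h']; exact h
    · have h2 : a ^ (-(d.natAbs : ℤ)) = b ^ (-(d.natAbs : ℤ)) := by rw [← h']; exact h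
      rw [zpow_neg, zpow_neg] at h2
      exact inv_injective h2
  rw [zpow_natCast, zpow_natCast] at habs
  exact (Odd.strictMono_pow (R := ℝ) (Int.natAbs_odd.mpr hd)).injective habs

/-- **The image of `Φ_W` is cut out by the binomial equations `z^{β_j} = 1`.**
If `W = {0, w_1, …, w_{n+k}} ⊂ ℤ^n` spans `ℤ^n` mod 2 and `β_1, …, β_k` is a ℤ-basis
of the lattice of linear relations among `w_1, …, w_{n+k}`, then the image of
`Φ_W : (ℝ∖{0})^n → (ℝ∖{0})^{n+k}`, `x ↦ (x^{w_1}, …, x^{w_{n+k}})`, equals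
`{z ∈ (ℝ∖{0})^{n+k} : z^{β_1} = ⋯ = z^{β_k} = 1}`. -/
theorem gale_dual_image
    (n k : ℕ) (hn : 1 ≤ n)
    (w : Fin (n + k) → (Fin n → ℤ))
    (hspan : Submodule.span (ZMod 2)
      (insert 0 (Set.range (fun i => fun j => ((w i j : ZMod 2))))) = ⊤)
    (β : Fin k → (Fin (n + k) → ℤ))
    (hβrel : ∀ j, ∑ i, β j i • w i = 0)
    (hβindep : LinearIndependent ℤ β)
    (hβspan : ∀ b : Fin (n + k) → ℤ, (∑ i, b i • w i = 0) →
      b ∈ Submodule.span ℤ (Set.range β)) :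
    (fun x : Fin n → ℝ => fun i => ∏ j, x j ^ (w i j)) '' {x | ∀ j, x j ≠ 0} =
      {z : Fin (n + k) → ℝ | (∀ i, z i ≠ 0) ∧ ∀ j, (∏ i, z i ^ (β j i)) = 1} := by
  classical
  ext z
  simp only [Set.mem_image, Set.mem_setOf_eq]
  constructor
  · rintro ⟨x, hx, rfl⟩
    constructor
    · intro i
      exact Finset.prod_ne_zero_iff.mpr fun j _ => zpow_ne_zero _ (hx j)
    · intro j'
      calc ∏ i, (∏ j, x j ^ w i j) ^ β j' i
          = ∏ i, ∏ j, x j ^ ((β j' i • w i) j) :=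
            Finset.prod_congr rfl fun i _ => (gale_psi_zsmul (β j' i) (w i)).symm
        _ = ∏ j, x j ^ ((∑ i, β j' i • w i) j) :=
            (gale_psi_sum hx Finset.univ fun i => β j' i • w i).symm
        _ = 1 := by rw [hβrel j']; exact gale_psi_zero
  · rintro ⟨hz, hrel⟩
    -- extract an odd-determinant square submatrix
    set w2 : Fin (n + k) → (Fin n → ZMod 2) := fun i j => ((w i j : ZMod 2)) with hw2
    have hsp : Submodule.span (ZMod 2) (Set.range w2) = ⊤ := by
      rw [← Submodule.span_insert_zero]; exact hspan
    obtain ⟨t, hts, htspan, htind⟩ := exists_linearIndependent (ZMod 2) (Set.range w2)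
    rw [hsp] at htspan
    have htfin : t.Finite := (Set.finite_range w2).subset hts
    haveI : Fintype t := htfin.fintype
    let B : Module.Basis t (ZMod 2) (Fin n → ZMod 2) :=
      Module.Basis.mk htind (by rw [Subtype.range_coe, htspan])
    have hcard : Fintype.card t = n := by
      have := Module.finrank_eq_card_basis B
      simpa [Module.finrank_pi] using this.symm
    let g : Fin n ≃ t := (Fintype.equivFinOfCardEq hcard).symm
    have he : ∀ s : Fin n, ∃ i, w2 i = (g s : Fin n → ZMod 2) := fun s => hts (g s).2
    choose e hee using he
    have hrows : LinearIndependent (ZMod 2) (fun s => w2 (e s)) := by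
      have h : (fun s => w2 (e s)) = (fun s : t => (s : Fin n → ZMod 2)) ∘ g := by
        funext s; rw [hee]; rfl
      rw [h]
      exact htind.comp g (g.injective)
    set M : Matrix (Fin n) (Fin n) ℤ := Matrix.of (fun s j => w (e s) j) with hM
    have hunit : IsUnit (M.map (Int.cast : ℤ → ZMod 2)) := by
      rw [← Matrix.linearIndependent_rows_iff_isUnit]
      convert hrows using 1
      rfl
    have hdet2 : IsUnit (M.map (Int.cast : ℤ → ZMod 2)).det :=
      (Matrix.isUnit_iff_isUnit_det _).mp hunit
    have hdetcast : (M.map (Int.cast : ℤ → ZMod 2)).det = ((M.det : ℤ) : ZMod 2) := by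
      rw [show M.map (Int.cast : ℤ → ZMod 2) = (Int.castRingHom (ZMod 2)).mapMatrix M from rfl,
        ← RingHom.map_det]
      rfl
    have hdvd : ¬ ((2:ℤ) ∣ M.det) := by
      intro hdvd
      rw [hdetcast, isUnit_iff_ne_zero] at hdet2
      refine hdet2 ?_
      rw [ZMod.intCast_zmod_eq_zero_iff_dvd]
      exact_mod_cast hdvd
    have hdodd : Odd M.det := by
      rcases Int.even_or_odd M.det with hev | hod
      · obtain ⟨c, hc⟩ := hev; exact absurd ⟨c, by omega⟩ hdvd
      · exact hod
    have hdet0 : M.det ≠ 0 := fun h0 => hdvd (h0 ▸ dvd_zero 2)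
    -- solve for magnitudes over ℝ
    set Mr : Matrix (Fin n) (Fin n) ℝ := M.map (Int.cast : ℤ → ℝ) with hMr
    have hMrdet : IsUnit Mr.det := by
      rw [show Mr = (Int.castRingHom ℝ).mapMatrix M from rfl, ← RingHom.map_det]
      simpa [isUnit_iff_ne_zero] using hdet0
    set y : Fin n → ℝ := Mr⁻¹.mulVec (fun s => Real.log (abs (z (e s)))) with hy0
    have hy : ∀ s, ∑ j, (w (e s) j : ℝ) * y j = Real.log (abs (z (e s))) := by
      intro s
      have h1 : Mr.mulVec y = fun s => Real.log (abs (z (e s))) := by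
        rw [hy0, Matrix.mulVec_mulVec, Matrix.mul_nonsing_inv _ hMrdet, Matrix.one_mulVec]
      have := congrFun h1 s
      simpa [Matrix.mulVec, dotProduct, hMr, hM] using this
    -- solve for signs over ZMod 2
    set M2 : Matrix (Fin n) (Fin n) (ZMod 2) := M.map (Int.cast : ℤ → ZMod 2) with hM2
    set ε : Fin n → ZMod 2 := fun s => if z (e s) < 0 then 1 else 0 with hε0
    set σ : Fin n → ZMod 2 := M2⁻¹.mulVec ε with hσ0
    have hσ : ∀ s, ∑ j, ((w (e s) j : ZMod 2)) * σ j = ε s := by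
      intro s
      have h1 : M2.mulVec σ = ε := by
        rw [hσ0, Matrix.mulVec_mulVec, Matrix.mul_nonsing_inv _
          ((Matrix.isUnit_iff_isUnit_det _).mp hunit), Matrix.one_mulVec]
      have := congrFun h1 s
      simpa [Matrix.mulVec, dotProduct, hM2, hM] using this
    -- the candidate preimage
    set x : Fin n → ℝ := fun j => (if σ j = 0 then (1:ℝ) else -1) * Real.exp (y j) with hx0
    have hx : ∀ j, x j ≠ 0 := by
      intro j
      rw [hx0]
      refine mul_ne_zero ?_ (Real.exp_ne_zero _)
      split <;> norm_num
    have hxe : ∀ s, ∏ j, x j ^ (w (e s) j) = z (e s) := by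
      intro s
      rw [hx0]
      rw [gale_key_prod σ y (w (e s))]
      rw [hσ s, hy s, Real.exp_log (abs_pos.mpr (hz (e s)))]
      rcases lt_or_gt_of_ne (hz (e s)) with hneg | hpos
      · rw [hε0]
        simp only [if_pos hneg, galeChi]
        rw [if_neg (by decide : (1 : ZMod 2) ≠ 0), abs_of_neg hneg]
        ring
      · rw [hε0]
        simp only [if_neg (not_lt.mpr hpos.le), galeChi, abs_of_pos hpos]
        norm_num
    refine ⟨x, hx, ?_⟩
    funext i
    show ∏ j, x j ^ (w i j) = z i
    -- Cramer relation
    set d : ℤ := M.det with hd0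
    set c : Fin n → ℤ := Matrix.cramer (M.transpose) (w i) with hc0
    have hcram : ∀ j, ∑ s, c s * w (e s) j = d * w i j := by
      intro j
      have h1 := Matrix.mulVec_cramer (M.transpose) (w i)
      have h2 := congrFun h1 j
      simpa [Matrix.mulVec, dotProduct, Matrix.transpose_apply, hM, hd0,
        Matrix.det_transpose, mul_comm] using h2
    set b0 : Fin (n + k) → ℤ :=
      (d • Pi.single i (1:ℤ)) - ∑ s, c s • Pi.single (e s) (1:ℤ) with hb00
    have hb0rel : ∑ i', b0 i' • w i' = 0 := by
      have hT : ∀ b : Fin (n + k) → ℤ, ∑ i', b i' • w i' =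
          Fintype.linearCombination ℤ w b := fun b =>
        (Fintype.linearCombination_apply (R := ℤ) (v := w) b).symm
      rw [hT, hb00, map_sub, map_smul, map_sum]
      simp only [map_smul, Fintype.linearCombination_apply_single, one_smul]
      funext j
      simp only [Pi.sub_apply, Pi.smul_apply, smul_eq_mul, Finset.sum_apply, Pi.zero_apply]
      rw [sub_eq_zero]
      exact (hcram j).symm
    have hb0span := hβspan b0 hb0rel
    have hψ : ∏ i', z i' ^ b0 i' = 1 := by
      refine gale_psi_span hz ?_ hb0span
      rintro b ⟨j', rfl⟩
      exact hrel j'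
    have hzd : z i ^ d = ∏ s, z (e s) ^ c s := by
      have hexp : ∏ i', z i' ^ b0 i' =
          (z i ^ d) * (∏ s, z (e s) ^ c s)⁻¹ := by
        rw [hb00, sub_eq_add_neg, gale_psi_add hz]
        congr 1
        · rw [gale_psi_zsmul, gale_psi_single, zpow_one]
        · rw [gale_psi_neg]
          congr 1
          rw [gale_psi_sum hz]
          refine Finset.prod_congr rfl fun s _ => ?_
          rw [gale_psi_zsmul, gale_psi_single, zpow_one]
      rw [hexp] at hψ
      have hprod0 : (∏ s, z (e s) ^ c s) ≠ 0 :=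
        Finset.prod_ne_zero_iff.mpr fun s _ => zpow_ne_zero _ (hz (e s))
      field_simp at hψ
      exact hψ
    have hxd : (∏ j, x j ^ (w i j)) ^ d = ∏ s, z (e s) ^ c s := by
      have hsum : (∑ s, c s • w (e s)) = d • w i := by
        funext j
        simp only [Finset.sum_apply, Pi.smul_apply, smul_eq_mul]
        exact hcram j
      calc (∏ j, x j ^ (w i j)) ^ d
          = ∏ j, x j ^ ((d • w i) j) := (gale_psi_zsmul d (w i)).symm
        _ = ∏ j, x j ^ ((∑ s, c s • w (e s)) j) := by rw [hsum]
        _ = ∏ s, ∏ j, x j ^ ((c s • w (e s)) j) := gale_psi_sum hx Finset.univ _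
        _ = ∏ s, (∏ j, x j ^ (w (e s) j)) ^ c s :=
            Finset.prod_congr rfl fun s _ => gale_psi_zsmul (c s) (w (e s))
        _ = ∏ s, z (e s) ^ c s := Finset.prod_congr rfl fun s _ => by rw [hxe s]
    exact (gale_zpow_odd_inj hdodd (hxd.trans hzd.symm)).symm ▸ rfl
end

section
/- Let n ≥ 1, k ≥ 0 be integers and let W = {w_0 = 0, w_1, …, w_{n+k}} ⊂ ℤ^n span ℤ^n mod 2. Then the map Φ_W : (ℝ∖{0})^n → (ℝ∖{0})^{n+k}, Φ_W(x) = (x^{w_1}, …, x^{w_{n+k}}), is injective. -/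
private lemma neg_one_zpow_eq_natAbs (z : ℤ) : (-1 : ℝ) ^ z = (-1 : ℝ) ^ z.natAbs := by
  rcases Int.even_or_odd z with h | h
  · rw [h.neg_one_zpow, (Int.natAbs_even.mpr h).neg_one_pow]
  · rw [h.neg_one_zpow, (Int.natAbs_odd.mpr h).neg_one_pow]

private lemma natAbs_cast_zmod2 (z : ℤ) : ((z.natAbs : ZMod 2)) = ((z : ZMod 2)) := by
  rcases Int.natAbs_eq z with h | h
  · conv_rhs => rw [h, Int.cast_natCast]
  · conv_rhs => rw [h, Int.cast_neg, Int.cast_natCast, CharTwo.neg_eq]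

/-- **Injectivity of `Φ_W`.**
If `W = {0, w_1, …, w_{n+k}} ⊂ ℤ^n` spans `ℤ^n` mod 2, then the map
`Φ_W : (ℝ∖{0})^n → (ℝ∖{0})^{n+k}`, `x ↦ (x^{w_1}, …, x^{w_{n+k}})`, is injective. -/
theorem gale_map_injective
    (n k : ℕ) (hn : 1 ≤ n)
    (w : Fin (n + k) → (Fin n → ℤ))
    (hspan : Submodule.span (ZMod 2)
      (insert 0 (Set.range (fun i => fun j => ((w i j : ZMod 2))))) = ⊤) :
    Set.InjOn (fun x : Fin n → ℝ => fun i => ∏ j, x j ^ (w i j))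
      {x | ∀ j, x j ≠ 0} := by
  intro x hx y hy hxy
  simp only [Set.mem_setOf_eq] at hx hy
  have hprod : ∀ i, ∏ j, x j ^ (w i j) = ∏ j, y j ^ (w i j) := fun i => congrFun hxy i
  set wbar : Fin (n+k) → Fin n → ZMod 2 := fun i j => ((w i j : ZMod 2)) with hwbar
  have hspan' : Submodule.span (ZMod 2) (Set.range wbar) = ⊤ := by
    rw [← Submodule.span_insert_zero]; exact hspan
  have hsingle : ∀ m : Fin n, ∃ c : Fin (n+k) → ZMod 2,
      ∑ i, c i • wbar i = Pi.single m 1 := by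
    intro m
    exact (Submodule.mem_span_range_iff_exists_fun (ZMod 2)).mp (by rw [hspan']; trivial)
  choose c hc using hsingle
  -- the integer matrix A = C * W, congruent to 1 mod 2
  set A : Matrix (Fin n) (Fin n) ℤ :=
    Matrix.of (fun m j => ∑ i, ((c m i).val : ℤ) * w i j) with hA
  have hA2 : (Int.castRingHom (ZMod 2)).mapMatrix A = 1 := by
    ext m j
    have h1 := congrFun (hc m) j
    simp only [Finset.sum_apply, Pi.smul_apply, hwbar, smul_eq_mul] at h1
    simp only [RingHom.mapMatrix_apply, Matrix.map_apply, hA, Matrix.of_apply,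
      Matrix.one_apply, eq_intCast]
    push_cast
    simp only [ZMod.natCast_val, ZMod.cast_id]
    rw [h1, Pi.single_apply]
    simp [eq_comm]
  have hdet : A.det ≠ 0 := by
    intro h
    have h2 : ((Int.castRingHom (ZMod 2)).mapMatrix A).det = 1 := by
      rw [hA2, Matrix.det_one]
    rw [← RingHom.map_det, h, map_zero] at h2
    exact zero_ne_one h2
  -- Step 1 : absolute values agree
  set t : Fin n → ℝ := fun j => Real.log (x j) - Real.log (y j) with hT
  have hwt : ∀ i, ∑ j, (w i j : ℝ) * t j = 0 := by
    intro i
    have h1 : Real.log (∏ j, x j ^ (w i j)) = Real.log (∏ j, y j ^ (w i j)) := by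
      rw [hprod i]
    rw [Real.log_prod (fun j _ => zpow_ne_zero _ (hx j)),
        Real.log_prod (fun j _ => zpow_ne_zero _ (hy j))] at h1
    simp only [Real.log_zpow] at h1
    simp only [hT, mul_sub]
    rw [Finset.sum_sub_distrib, h1, sub_self]
  have ht0 : t = 0 := by
    apply Matrix.eq_zero_of_mulVec_eq_zero
      (M := A.map (Int.cast : ℤ → ℝ))
    · rw [show A.map (Int.cast : ℤ → ℝ) = (Int.castRingHom ℝ).mapMatrix A from rfl,
        ← RingHom.map_det]
      simpa using hdet
    · ext m
      simp only [Matrix.mulVec, dotProduct, Matrix.map_apply, hA, Matrix.of_apply,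
        Pi.zero_apply]
      push_cast
      simp_rw [Finset.sum_mul, mul_assoc]
      rw [Finset.sum_comm]
      simp_rw [← Finset.mul_sum]
      rw [Finset.sum_congr rfl (fun i _ => by rw [hwt i, mul_zero]), Finset.sum_const_zero]
  have habs : ∀ j, |x j| = |y j| := by
    intro j
    have h1 : Real.log (x j) = Real.log (y j) := by
      have := congrFun ht0 j
      simpa [hT, sub_eq_zero] using this
    rw [← Real.log_abs, ← Real.log_abs (y j)] at h1
    have := Real.exp_log (abs_pos.mpr (hx j))
    rw [← this, h1, Real.exp_log (abs_pos.mpr (hy j))]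
  -- Step 2 : signs agree
  classical
  set e : Fin n → ZMod 2 := fun j => if x j = y j then 0 else 1 with he
  have hsgn : ∀ i, ∑ j, wbar i j * e j = 0 := by
    intro i
    have hr : ∏ j, (x j / y j) ^ (w i j) = 1 := by
      simp_rw [div_zpow]
      rw [Finset.prod_div_distrib, hprod i, div_self]
      exact Finset.prod_ne_zero_iff.mpr (fun j _ => zpow_ne_zero _ (hy j))
    have hrat : ∀ j, x j / y j = if x j = y j then (1:ℝ) else -1 := by
      intro j
      rcases abs_eq_abs.mp (habs j) with h | h
      · simp [h, div_self (hy j)]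
      · have hne : x j ≠ y j := fun hcon => hy j (by
          have h2 := hcon.symm.trans h
          linarith)
        rw [if_neg hne, h, neg_div, div_self (hy j)]
    rw [Finset.prod_congr rfl (fun j _ => by rw [hrat j])] at hr
    have hstep : ∏ j, (if x j = y j then (1:ℝ) else -1) ^ (w i j)
        = (-1:ℝ) ^ (∑ j, if x j = y j then 0 else (w i j).natAbs) := by
      rw [← Finset.prod_pow_eq_pow_sum]
      refine Finset.prod_congr rfl (fun j _ => ?_)
      by_cases h : x j = y j
      · simp [h]
      · simp only [h, if_false]
        exact neg_one_zpow_eq_natAbs _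
    rw [hstep] at hr
    have heven : Even (∑ j, if x j = y j then 0 else (w i j).natAbs) :=
      (neg_one_pow_eq_one_iff_even (by norm_num : (-1:ℝ) ≠ 1)).mp hr
    have hcast : ((∑ j, if x j = y j then 0 else (w i j).natAbs : ℕ) : ZMod 2) = 0 := by
      rw [ZMod.natCast_eq_zero_iff]
      exact heven.two_dvd
    rw [Nat.cast_sum] at hcast
    rw [← hcast]
    refine Finset.sum_congr rfl (fun j _ => ?_)
    by_cases h : x j = y j
    · simp [he, h]
    · simp only [he, h, if_false, mul_one, Nat.cast_ite, Nat.cast_zero]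
      rw [natAbs_cast_zmod2]
  funext m
  have h2 : ∑ j, (Pi.single m (1 : ZMod 2) : Fin n → ZMod 2) j * e j = e m := by
    rw [Finset.sum_eq_single m]
    · simp
    · intro b _ hb
      rw [Pi.single_eq_of_ne hb, zero_mul]
    · intro habs
      exact absurd (Finset.mem_univ m) habs
  rw [← hc m] at h2
  simp only [Finset.sum_apply, Pi.smul_apply, smul_eq_mul, Finset.sum_mul] at h2
  rw [Finset.sum_comm] at h2
  have h3 : (0 : ZMod 2) = e m := by
    rw [← h2]
    simp_rw [mul_assoc, ← Finset.mul_sum]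
    rw [Finset.sum_congr rfl (fun i _ => by rw [hsgn i, mul_zero]), Finset.sum_const_zero]
  by_contra hne
  have h4 : e m = 0 := h3.symm
  rw [he] at h4
  simp only [if_neg hne] at h4
  exact one_ne_zero h4
end

section
/- Let n ≥ 1, k ≥ 0 be integers, let W = {w_0 = 0, w_1, …, w_{n+k}} ⊂ ℤ^n span ℤ^n mod 2, and let Φ_W : (ℝ∖{0})^n → ℝ^{n+k} be the map Φ_W(x) = (x^{w_1}, …, x^{w_{n+k}}). Let Λ_1, …, Λ_n be degree-1 (affine) polynomials on ℝ^{n+k} and set f_i := Λ_i ∘ Φ_W for i = 1,…,n. Let L = {z ∈ ℝ^{n+k} : Λ_1(z) = ⋯ = Λ_n(z) = 0}, and suppose Ψ_p : ℝ^k → ℝ^{n+k}, Ψ_p(y) = (p_1(y),…,p_{n+k}(y)) with each p_i affine, is an affine isomorphism of ℝ^k onto L. Let β_1, …, β_k ∈ ℤ^{n+k} be a ℤ-basis of the lattice of linear relations {β ∈ ℤ^{n+k} : ∑_{i=1}^{n+k} b_i·w_i = 0}, and let M_A = {y ∈ ℝ^k : p_i(y) ≠ 0 for all i}. Then the map y ↦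 Φ_W^{-1}(Ψ_p(y)) gives a bijection from the solution set {y ∈ M_A : p(y)^{β_1} = ⋯ = p(y)^{β_k} = 1} onto the solution set {x ∈ (ℝ∖{0})^n : f_1(x) = ⋯ = f_n(x) = 0}; more precisely, Φ_W restricts to a bijection from {x ∈ (ℝ∖{0})^n : f_1(x) = ⋯ = f_n(x) = 0} onto Ψ_p({y ∈ M_A : p(y)^{β_1} = ⋯ = p(y)^{β_k} = 1}). -/
open Finset

namespace GaleAux

variable {N : ℕ}

noncomputable def pz (z : Fin N → ℝ) (c : Fin N → ℤ) : ℝ := ∏ i, z i ^ c i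

variable {z : Fin N → ℝ}

lemma pz_ne (hz : ∀ i, z i ≠ 0) (c : Fin N → ℤ) : pz z c ≠ 0 :=
  Finset.prod_ne_zero_iff.2 fun i _ => zpow_ne_zero _ (hz i)

lemma pz_zero : pz z 0 = 1 := by simp [pz]

lemma pz_add (hz : ∀ i, z i ≠ 0) (a b : Fin N → ℤ) :
    pz z (a + b) = pz z a * pz z b := by
  rw [pz, pz, pz, ← Finset.prod_mul_distrib]
  exact Finset.prod_congr rfl fun i _ => zpow_add₀ (hz i) _ _

lemma pz_smul (hz : ∀ i, z i ≠ 0) (m : ℤ) (a : Fin N → ℤ) :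
    pz z (m • a) = pz z a ^ m := by
  rw [pz, pz, ← Finset.prod_zpow]
  exact Finset.prod_congr rfl fun i _ => by
    rw [Pi.smul_apply, smul_eq_mul, mul_comm, zpow_mul]

lemma pz_sum (hz : ∀ i, z i ≠ 0) {ι : Type*} (s : Finset ι) (v : ι → Fin N → ℤ) :
    pz z (∑ j ∈ s, v j) = ∏ j ∈ s, pz z (v j) := by
  classical
  induction s using Finset.induction with
  | empty => simp [pz_zero]
  | insert _ _ h ih => rw [Finset.sum_insert h, pz_add hz, Finset.prod_insert h, ih]

lemma pz_combo (hz : ∀ i, z i ≠ 0) {ι : Type*} [Fintype ι] (v : ι → ℤ) (u : ι → Fin N → ℤ) :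
    pz z (∑ i, v i • u i) = ∏ i, pz z (u i) ^ v i := by
  rw [pz_sum hz]
  exact Finset.prod_congr rfl fun i _ => pz_smul hz _ _

lemma pz_span (hz : ∀ i, z i ≠ 0) {κ : Type*} (β : κ → Fin N → ℤ)
    (h1 : ∀ j, pz z (β j) = 1) {b : Fin N → ℤ}
    (hb : b ∈ Submodule.span ℤ (Set.range β)) : pz z b = 1 := by
  induction hb using Submodule.span_induction with
  | mem x hx => obtain ⟨j, rfl⟩ := hx; exact h1 j
  | zero => exact pz_zero
  | add a b _ _ ha hb => rw [pz_add hz, ha, hb, one_mul]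
  | smul m a _ ha => rw [pz_smul hz, ha, one_zpow]

lemma pz_single (l : Fin N) (d : ℤ) : pz z (d • Pi.single l 1) = z l ^ d := by
  rw [pz, Finset.prod_eq_single l (fun i _ hi => by simp [Pi.single_apply, hi]) (by simp)]
  simp

lemma odd_ne_zero {d : ℤ} (hd : Odd d) : d ≠ 0 := by
  rintro rfl; exact (Int.not_odd_iff_even.mpr Even.zero) hd

lemma neg_one_zpow {d : ℤ} (hd : Odd d) : (-1 : ℝ) ^ d = -1 := by
  obtain ⟨m, rfl⟩ := hd
  rw [zpow_add₀ (by norm_num : (-1:ℝ) ≠ 0), zpow_one, zpow_mul]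
  norm_num

lemma eq_one_of_zpow {c : ℝ} (hc : c ≠ 0) {d : ℤ} (hd : Odd d) (h : c ^ d = 1) : c = 1 := by
  have habs : |c| ^ d = 1 := by
    have := map_zpow₀ (absHom (α := ℝ)) c d
    simp only [absHom, MonoidWithZeroHom.coe_mk, ZeroHom.coe_mk] at this
    rw [← this, h, abs_one]
  have hlog : (d : ℝ) * Real.log |c| = 0 := by
    rw [← Real.log_zpow, habs, Real.log_one]
  have hlc : Real.log |c| = 0 := by
    rcases mul_eq_zero.mp hlog with h' | h'
    · exact absurd (by exact_mod_cast h' : d = 0) (odd_ne_zero hd)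
    · exact h'
  have habs1 : |c| = 1 := by
    have := Real.exp_log (abs_pos.mpr hc)
    rw [hlc, Real.exp_zero] at this; exact this.symm
  rcases (abs_eq zero_le_one).mp habs1 with h1 | h1
  · exact h1
  · exfalso
    rw [h1, neg_one_zpow hd] at h
    norm_num at h

lemma zpow_inj {a b : ℝ} (ha : a ≠ 0) (hb : b ≠ 0) {d : ℤ} (hd : Odd d)
    (h : a ^ d = b ^ d) : a = b := by
  have hc : (a / b) ^ d = 1 := by rw [div_zpow, h, div_self (zpow_ne_zero _ hb)]
  have := eq_one_of_zpow (div_ne_zero ha hb) hd hc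
  field_simp at this
  exact this

lemma exists_root {t : ℝ} (ht : t ≠ 0) {d : ℤ} (hd : Odd d) :
    ∃ x : ℝ, x ≠ 0 ∧ x ^ d = t := by
  set s : ℝ := if t < 0 then -1 else 1 with hs
  have hsma : s * |t| = t := by
    rcases lt_or_gt_of_ne ht with h | h
    · rw [hs, if_pos h, abs_of_neg h]; ring
    · rw [hs, if_neg (not_lt.mpr h.le), abs_of_pos h]; ring
  refine ⟨s * |t| ^ ((d : ℝ)⁻¹), ?_, ?_⟩
  · apply mul_ne_zero
    · rcases ite_eq_or_eq (t < 0) (-1 : ℝ) 1 with h | h <;> rw [← hs] at h <;> rw [h] <;> norm_num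
    · exact ne_of_gt (Real.rpow_pos_of_pos (abs_pos.mpr ht) _)
  · rw [mul_zpow]
    have h1 : (|t| ^ ((d : ℝ)⁻¹)) ^ d = |t| := by
      rw [← Real.rpow_intCast (|t| ^ ((d : ℝ)⁻¹)) d, ← Real.rpow_mul (abs_nonneg t),
        inv_mul_cancel₀ (by exact_mod_cast odd_ne_zero hd), Real.rpow_one]
    have h2 : s ^ d = s := by
      rcases ite_eq_or_eq (t < 0) (-1 : ℝ) 1 with h | h <;> rw [← hs] at h <;> rw [h]
      · exact neg_one_zpow hd
      · exact one_zpow d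
    rw [h1, h2, hsma]

end GaleAux

open GaleAux in
/-- **Gale duality for polynomial systems.**
Suppose `W = {0, w_1, …, w_{n+k}} ⊂ ℤ^n` spans `ℤ^n` mod 2, with
`Φ_W(x) = (x^{w_1}, …, x^{w_{n+k}})`. Let `Λ_1, …, Λ_n` be affine (degree-1) polynomials
on `ℝ^{n+k}`, set `f_i := Λ_i ∘ Φ_W`, let `L` be the common zero set of the `Λ_i`, and
suppose `Ψ_p(y) = (p_1(y), …, p_{n+k}(y))` (with each `p_i` affine) is a bijection of
`ℝ^k` onto `L`.  If `β_1, …, β_k` is a ℤ-basis of the lattice of linear relations among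
`w_1, …, w_{n+k}`, then `Φ_W` restricts to a bijection from the solution set
`{x ∈ (ℝ∖{0})^n : f_1(x) = ⋯ = f_n(x) = 0}` onto
`Ψ_p({y ∈ M_A : p(y)^{β_1} = ⋯ = p(y)^{β_k} = 1})`. -/
theorem gale_duality_bijection
    (n k : ℕ) (hn : 1 ≤ n)
    (w : Fin (n + k) → (Fin n → ℤ))
    (hspan : Submodule.span (ZMod 2)
      (insert 0 (Set.range (fun i => fun j => ((w i j : ZMod 2))))) = ⊤)
    (Φ : (Fin n → ℝ) → (Fin (n + k) → ℝ))
    (hΦ : ∀ x i, Φ x i = ∏ j, x j ^ (w i j))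
    (Λ : Fin n → (Fin (n + k) → ℝ) → ℝ)
    (Λ₀ : Fin n → ℝ) (Λlin : Fin n → (Fin (n + k) → ℝ))
    (hΛ : ∀ i z, Λ i z = Λ₀ i + ∑ m, Λlin i m * z m)
    (f : Fin n → (Fin n → ℝ) → ℝ)
    (hf : ∀ i x, f i x = Λ i (Φ x))
    (p : Fin (n + k) → (Fin k → ℝ) → ℝ)
    (p₀ : Fin (n + k) → ℝ) (pa : Fin (n + k) → (Fin k → ℝ))
    (hp : ∀ i y, p i y = p₀ i + ∑ j, pa i j * y j)
    (Ψ : (Fin k → ℝ) → (Fin (n + k) → ℝ))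
    (hΨ : ∀ y i, Ψ y i = p i y)
    (hΨbij : Set.BijOn Ψ Set.univ {z : Fin (n + k) → ℝ | ∀ i, Λ i z = 0})
    (β : Fin k → (Fin (n + k) → ℤ))
    (hβrel : ∀ j, ∑ i, β j i • w i = 0)
    (hβindep : LinearIndependent ℤ β)
    (hβspan : ∀ b : Fin (n + k) → ℤ, (∑ i, b i • w i = 0) →
      b ∈ Submodule.span ℤ (Set.range β)) :
    Set.BijOn Φ
      {x : Fin n → ℝ | (∀ j, x j ≠ 0) ∧ ∀ i, f i x = 0}
      (Ψ '' {y : Fin k → ℝ | (∀ i, p i y ≠ 0) ∧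
        ∀ j, (∏ i, p i y ^ (β j i)) = 1}) := by
  classical
  have hΦpz : ∀ (x : Fin n → ℝ) (i : Fin (n + k)), Φ x i = pz x (w i) := hΦ
  -- extract integer combinations congruent to standard basis vectors mod 2
  have hspan' : Submodule.span (ZMod 2)
      (Set.range (fun i => fun j => ((w i j : ZMod 2)))) = ⊤ := by
    rw [← Submodule.span_insert_zero]; exact hspan
  have hcex : ∀ jj : Fin n, ∃ c : Fin (n + k) → ℤ,
      ∀ l, ((∑ i, c i * w i l : ℤ) : ZMod 2) = if l = jj then 1 else 0 := by
    intro jj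
    have hmem : (Pi.single jj 1 : Fin n → ZMod 2) ∈
        Submodule.span (ZMod 2) (Set.range (fun i => fun j => ((w i j : ZMod 2)))) := by
      rw [hspan']; exact Submodule.mem_top
    rw [Submodule.mem_span_range_iff_exists_fun] at hmem
    obtain ⟨cb, hcb⟩ := hmem
    refine ⟨fun i => ((cb i).val : ℤ), fun l => ?_⟩
    have h2 := congrFun hcb l
    simp only [Finset.sum_apply, Pi.smul_apply, smul_eq_mul] at h2
    have hv' : ∀ a : ZMod 2, ((a.val : ZMod 2)) = a := by decide
    have h3 : ((∑ i, ((cb i).val : ℤ) * w i l : ℤ) : ZMod 2)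
        = ∑ i, cb i * ((w i l : ZMod 2)) := by
      push_cast
      exact Finset.sum_congr rfl fun i _ => by rw [hv']
    rw [h3, h2, Pi.single_apply]
  choose c hc using hcex
  set M : Matrix (Fin n) (Fin n) ℤ := Matrix.of (fun j l => ∑ i, c j i * w i l) with hMdef
  have hMel : ∀ j l, M j l = ∑ i, c j i * w i l := fun j l => rfl
  have hM2 : M.map (Int.cast : ℤ → ZMod 2) = 1 := by
    ext j l
    rw [Matrix.map_apply, Matrix.one_apply, hMel j l, hc j l]
    by_cases h : j = l
    · subst h; simp
    · rw [if_neg h, if_neg (Ne.symm h)]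
  have hdodd : Odd M.det := by
    have h1 : ((M.det : ℤ) : ZMod 2) = 1 := by
      have h0 : ((M.det : ℤ) : ZMod 2) = (M.map (Int.cast : ℤ → ZMod 2)).det := by
        simpa [RingHom.mapMatrix_apply, Int.coe_castRingHom] using
          RingHom.map_det (Int.castRingHom (ZMod 2)) M
      rw [h0, hM2, Matrix.det_one]
    rw [← Int.not_even_iff_odd]
    intro heven
    have h0 : ((M.det : ℤ) : ZMod 2) = 0 :=
      (ZMod.intCast_zmod_eq_zero_iff_dvd M.det 2).mpr (by exact_mod_cast heven.two_dvd)
    rw [h0] at h1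
    exact absurd h1 (by decide)
  set d : ℤ := M.det with hddef
  set b : Fin n → Fin (n + k) → ℤ := fun l i => ∑ j, M.adjugate l j * c j i with hbdef
  have hb : ∀ l, ∑ i, b l i • w i = d • Pi.single l 1 := by
    intro l
    funext m
    have h3 : (M.adjugate * M) l m = d * (if l = m then 1 else 0) := by
      rw [Matrix.adjugate_mul]
      simp [Matrix.smul_apply, Matrix.one_apply, smul_eq_mul, hddef]
    rw [Matrix.mul_apply] at h3
    simp only [Finset.sum_apply, Pi.smul_apply, smul_eq_mul, Pi.single_apply]
    calc ∑ i, (∑ j, M.adjugate l j * c j i) * w i m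
        = ∑ j, M.adjugate l j * (∑ i, c j i * w i m) := by
          simp_rw [Finset.sum_mul, Finset.mul_sum, mul_assoc]
          exact Finset.sum_comm
      _ = ∑ j, M.adjugate l j * M j m := by simp_rw [hMel]
      _ = d * (if m = l then 1 else 0) := by
          rw [h3]
          by_cases h : l = m
          · subst h; simp
          · rw [if_neg h, if_neg (Ne.symm h)]
  have hpow : ∀ (x : Fin n → ℝ), (∀ j, x j ≠ 0) → ∀ i : Fin (n + k),
      pz x (w i) ^ d = ∏ l, (x l ^ d) ^ (w i l) := by
    intro x hx i
    rw [← pz_smul hx]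
    have hdw : (d • w i : Fin n → ℤ) = ∑ l, w i l • (d • Pi.single l 1) := by
      funext m
      simp only [Finset.sum_apply, Pi.smul_apply, smul_eq_mul, Pi.single_apply,
        mul_ite, mul_one, mul_zero]
      rw [Finset.sum_ite_eq Finset.univ m (fun l => w i l * d)]
      simp [mul_comm]
    rw [hdw, pz_combo hx]
    exact Finset.prod_congr rfl fun l _ => by rw [pz_single]
  have hdS : ∀ (x : Fin n → ℝ), (∀ j, x j ≠ 0) → ∀ l : Fin n,
      x l ^ d = ∏ i, pz x (w i) ^ b l i := by
    intro x hx l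
    rw [← pz_single (z := x) l d, ← hb l, pz_combo hx]
  refine ⟨?_, ?_, ?_⟩
  · -- MapsTo
    rintro x ⟨hx, hfx⟩
    have hΦL : Φ x ∈ {z : Fin (n + k) → ℝ | ∀ i, Λ i z = 0} := fun i => by
      rw [← hf i x]; exact hfx i
    obtain ⟨y, -, hy⟩ := hΨbij.surjOn hΦL
    refine ⟨y, ⟨fun i => ?_, fun j => ?_⟩, hy⟩
    · rw [← hΨ y i, hy, hΦpz]
      exact pz_ne hx (w i)
    · have hpy : ∀ i, p i y = pz x (w i) := fun i => by rw [← hΨ y i, hy, hΦpz]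
      calc ∏ i, p i y ^ β j i = ∏ i, pz x (w i) ^ β j i :=
            Finset.prod_congr rfl fun i _ => by rw [hpy]
        _ = pz x (∑ i, β j i • w i) := (pz_combo hx _ _).symm
        _ = 1 := by rw [hβrel j]; exact pz_zero
  · -- InjOn
    rintro x ⟨hx, -⟩ x' ⟨hx', -⟩ hxx
    funext l
    refine GaleAux.zpow_inj (hx l) (hx' l) hdodd ?_
    rw [hdS x hx l, hdS x' hx' l]
    exact Finset.prod_congr rfl fun i _ => by rw [← hΦpz, ← hΦpz, hxx]
  · -- SurjOn
    rintro zz ⟨y, ⟨hpy, hβ1⟩, rfl⟩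
    set z : Fin (n + k) → ℝ := fun i => p i y with hzdef
    have hz : ∀ i, z i ≠ 0 := hpy
    have hβ1' : ∀ j, pz z (β j) = 1 := hβ1
    have hroot : ∀ l : Fin n, ∃ x : ℝ, x ≠ 0 ∧ x ^ d = pz z (b l) :=
      fun l => exists_root (pz_ne hz (b l)) hdodd
    choose x hx0 hxd using hroot
    have hkey : ∀ i, Φ x i = z i := by
      intro i
      refine GaleAux.zpow_inj (by rw [hΦpz]; exact pz_ne hx0 (w i)) (hz i) hdodd ?_
      rw [hΦpz, hpow x hx0 i]
      set B : Fin (n + k) → ℤ := ∑ l, w i l • b l with hBdef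
      set E : Fin (n + k) → ℤ := d • Pi.single i 1 with hEdef
      have hstep : ∏ l, (x l ^ d) ^ w i l = pz z B := by
        rw [hBdef, pz_combo hz]
        exact Finset.prod_congr rfl fun l _ => by rw [hxd l]
      rw [hstep]
      have hBrel : ∑ i', B i' • w i' = d • w i := by
        funext m
        have hbm : ∀ l, (∑ i', b l i' * w i' m) = d * (Pi.single l 1 : Fin n → ℤ) m := by
          intro l
          have h5 := congrFun (hb l) m
          simpa [Finset.sum_apply, smul_eq_mul] using h5
        simp only [hBdef, Finset.sum_apply, Pi.smul_apply, smul_eq_mul]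
        calc ∑ i', (∑ l, w i l * b l i') * w i' m
            = ∑ l, w i l * (∑ i', b l i' * w i' m) := by
              simp_rw [Finset.sum_mul, Finset.mul_sum, mul_assoc]
              exact Finset.sum_comm
          _ = ∑ l, w i l * (d * (Pi.single l 1 : Fin n → ℤ) m) := by simp_rw [hbm]
          _ = d * w i m := by
              simp only [Pi.single_apply, mul_ite, mul_one, mul_zero]
              rw [Finset.sum_ite_eq Finset.univ m (fun l => w i l * d)]
              simp [mul_comm]
      have hErel : ∑ i', E i' • w i' = d • w i := by
        funext m
        simp only [hEdef, Finset.sum_apply, Pi.smul_apply, smul_eq_mul, Pi.single_apply,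
          mul_ite, mul_one, mul_zero, ite_mul, zero_mul]
        rw [Finset.sum_ite_eq' Finset.univ i (fun i' => d * w i' m)]
        simp
      have hrel : ∑ i', (B - E) i' • w i' = 0 := by
        simp only [Pi.sub_apply, sub_smul, Finset.sum_sub_distrib, hBrel, hErel, sub_self]
      have h1 : pz z (B - E) = 1 := pz_span hz β hβ1' (hβspan _ hrel)
      have h6 : pz z B = pz z E := by
        have h7 := pz_add hz (B - E) E
        rw [sub_add_cancel, h1, one_mul] at h7
        exact h7
      rw [h6, hEdef, pz_single]
    have hΦΨ : Φ x = Ψ y := funext fun i => by rw [hkey i]; exact (hΨ y i).symm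
    exact ⟨x, ⟨hx0, fun i => by rw [hf, hΦΨ]; exact hΨbij.mapsTo (Set.mem_univ y) i⟩, hΦΨ⟩
end

section
/- Let A be a finite collection of affine hyperplanes in ℝ^k in general position, meaning: for every subcollection of m ≤ k hyperplanes of A, their intersection is an affine subspace of dimension k − m, and no k+1 hyperplanes of A have a common point. Let x ∈ ℝ^k be a point lying on exactly j hyperplanes of A (0 ≤ j ≤ k). Then exactly 2^j connected components (chambers) of the complement ℝ^k ∖ ⋃A contain x in their closure. -/
open Set

private def chamberPhi {k N : ℕ} (a : Fin N → Fin k → ℝ) (i : Fin N) :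
    (Fin k → ℝ) →ₗ[ℝ] ℝ where
  toFun y := ∑ m, a i m * y m
  map_add' y z := by simp [mul_add, Finset.sum_add_distrib]
  map_smul' r y := by simp [Finset.mul_sum, mul_left_comm]

private lemma chamberPhi_apply {k N : ℕ} (a : Fin N → Fin k → ℝ) (i : Fin N)
    (y : Fin k → ℝ) : chamberPhi a i y = ∑ m, a i m * y m := rfl

private lemma chamberSign {X : Type*} [TopologicalSpace X] {s : Set X} (hs : IsPreconnected s)
    {f : X → ℝ} (hf : Continuous f) {c : ℝ} (hne : ∀ y ∈ s, f y ≠ c)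
    {y z : X} (hy : y ∈ s) (hz : z ∈ s) (h : c < f y) : c < f z := by
  by_contra h'
  push_neg at h'
  obtain ⟨w, hw, hwc⟩ := hs.intermediate_value₂ hz hy hf.continuousOn continuousOn_const h' h.le
  exact hne w hw hwc

/-- **Local chamber count for an arrangement in general position.**
Let `A` be a finite collection of `N` affine hyperplanes in `ℝ^k` in general position:
every `m ≤ k` of them meet in a (nonempty) affine subspace of dimension `k − m`, and no
`k+1` of them have a common point. If `x ∈ ℝ^k` lies on exactly `j` of the hyperplanes,
then exactly `2^j` chambers (connected components of the complement) contain `x` in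
their closure. -/
theorem chambers_at_point_of_general_position
    (k N j : ℕ) (hk : 1 ≤ k)
    (a : Fin N → (Fin k → ℝ)) (c : Fin N → ℝ)
    (ha : ∀ i, a i ≠ 0)
    (hgen : ∀ s : Finset (Fin N), s.card ≤ k →
      ∃ S : AffineSubspace ℝ (Fin k → ℝ),
        (S : Set (Fin k → ℝ)) = {y | ∀ i ∈ s, (∑ m, a i m * y m) = c i} ∧
        (S : Set (Fin k → ℝ)).Nonempty ∧
        Module.finrank ℝ S.direction = k - s.card)
    (hgen' : ∀ s : Finset (Fin N), k < s.card →
      ¬∃ y : Fin k → ℝ, ∀ i ∈ s, (∑ m, a i m * y m) = c i)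
    (x : Fin k → ℝ) (hjk : j ≤ k)
    (hx : {i : Fin N | (∑ m, a i m * x m) = c i}.ncard = j) :
    {C : Set (Fin k → ℝ) |
        (∃ y ∈ {y : Fin k → ℝ | ∀ i, (∑ m, a i m * y m) ≠ c i},
          C = connectedComponentIn {y : Fin k → ℝ | ∀ i, (∑ m, a i m * y m) ≠ c i} y) ∧
        x ∈ closure C}.Finite ∧
      {C : Set (Fin k → ℝ) |
        (∃ y ∈ {y : Fin k → ℝ | ∀ i, (∑ m, a i m * y m) ≠ c i},
          C = connectedComponentIn {y : Fin k → ℝ | ∀ i, (∑ m, a i m * y m) ≠ c i} y) ∧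
        x ∈ closure C}.ncard = 2 ^ j := by
  classical
  set Ω : Set (Fin k → ℝ) := {y | ∀ i, (∑ m, a i m * y m) ≠ c i} with hΩdef
  set J : Set (Fin N) := {i | (∑ m, a i m * x m) = c i} with hJdef
  have hJfin : J.Finite := Set.toFinite _
  haveI : Fintype J := hJfin.fintype
  have hcardJ : Fintype.card J = j := by
    have h1 := Set.ncard_eq_toFinset_card' J
    rw [Set.toFinset_card] at h1
    rw [← h1]
    exact hx
  -- continuity of the linear forms
  have hcont : ∀ i : Fin N, Continuous fun y : Fin k → ℝ => ∑ m, a i m * y m := by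
    intro i
    have := (chamberPhi a i).continuous_of_finiteDimensional
    exact this
  -- the pi linear map indexed by J is surjective
  set L : (Fin k → ℝ) →ₗ[ℝ] (J → ℝ) := LinearMap.pi (fun i : J => chamberPhi a (i : Fin N))
    with hLdef
  have hJcard' : hJfin.toFinset.card = j := by
    rw [← Set.ncard_eq_toFinset_card J hJfin]
    exact hx
  have hsurj : Function.Surjective L := by
    obtain ⟨S, hSeq, hSne, hSdim⟩ := hgen hJfin.toFinset (by omega)
    have hxS : x ∈ S := by
      rw [← SetLike.mem_coe, hSeq]
      intro i hi
      exact (hJfin.mem_toFinset.mp hi : i ∈ J)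
    have hdir : S.direction = LinearMap.ker L := by
      ext v
      rw [← S.vadd_mem_iff_mem_direction v hxS, ← SetLike.mem_coe, hSeq]
      simp only [Set.mem_setOf_eq, hJfin.mem_toFinset, LinearMap.mem_ker]
      have hsum : ∀ i : Fin N, (∑ m, a i m * (v +ᵥ x) m)
          = (∑ m, a i m * v m) + ∑ m, a i m * x m := by
        intro i
        rw [← Finset.sum_add_distrib]
        refine Finset.sum_congr rfl fun m _ => ?_
        have : (v +ᵥ x) m = v m + x m := rfl
        rw [this, mul_add]
      constructor
      · intro h
        funext i
        show (∑ m, a (i : Fin N) m * v m) = 0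
        have h1 := h i i.2
        have h2 : (∑ m, a (i : Fin N) m * x m) = c i := i.2
        rw [hsum] at h1
        linarith
      · intro h i hi
        have h1 : chamberPhi a i v = 0 := by
          have := congrFun h ⟨i, hi⟩
          simpa [hLdef, LinearMap.pi_apply] using this
        rw [chamberPhi_apply] at h1
        have h2 : (∑ m, a i m * x m) = c i := hi
        rw [hsum i, h1, h2, zero_add]
    have hker : Module.finrank ℝ (LinearMap.ker L) = k - j := by
      rw [← hdir, hSdim, hJcard']
    have hrn := LinearMap.finrank_range_add_finrank_ker L
    rw [Module.finrank_fin_fun, hker] at hrn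
    have hcod : Module.finrank ℝ (J → ℝ) = j := by
      rw [Module.finrank_pi, hcardJ]
    have hrange : LinearMap.range L = ⊤ := by
      apply Submodule.eq_top_of_finrank_eq
      rw [hcod]; omega
    exact LinearMap.range_eq_top.mp hrange
  -- a ball around x avoiding hyperplanes not through x
  obtain ⟨r, hr, hball⟩ : ∃ r > 0, ∀ y ∈ Metric.ball x r, ∀ i, i ∉ J →
      (∑ m, a i m * y m) ≠ c i := by
    have hO : IsOpen {y : Fin k → ℝ | ∀ i, i ∉ J → (∑ m, a i m * y m) ≠ c i} := by
      have heq : {y : Fin k → ℝ | ∀ i, i ∉ J → (∑ m, a i m * y m) ≠ c i} =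
          ⋂ i : Fin N, {y | i ∉ J → (∑ m, a i m * y m) ≠ c i} := by
        ext y; simp
      rw [heq]
      refine isOpen_iInter_of_finite fun i => ?_
      by_cases hi : i ∈ J
      · have : {y : Fin k → ℝ | i ∉ J → (∑ m, a i m * y m) ≠ c i} = Set.univ := by
          ext y; simp [hi]
        rw [this]; exact isOpen_univ
      · have : {y : Fin k → ℝ | i ∉ J → (∑ m, a i m * y m) ≠ c i} =
            (fun y : Fin k → ℝ => ∑ m, a i m * y m) ⁻¹' {c i}ᶜ := by
          ext y; simp [hi]
        rw [this]
        exact (isClosed_singleton.isOpen_compl).preimage (hcont i)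
    have hxO : x ∈ {y : Fin k → ℝ | ∀ i, i ∉ J → (∑ m, a i m * y m) ≠ c i} := by
      intro i hi
      exact fun h => hi (h : i ∈ J)
    obtain ⟨r, hr, hsub⟩ := Metric.isOpen_iff.mp hO x hxO
    exact ⟨r, hr, fun y hy i hi => hsub hy i hi⟩
  -- choose direction vectors for each sign pattern
  have hv : ∀ ε : J → Bool, ∃ v : Fin k → ℝ,
      ∀ i : J, (∑ m, a (i : Fin N) m * v m) = (if ε i then 1 else -1) := by
    intro ε
    obtain ⟨v, hveq⟩ := hsurj (fun i => if ε i then 1 else -1)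
    refine ⟨v, fun i => ?_⟩
    have := congrFun hveq i
    simpa [hLdef, LinearMap.pi_apply, chamberPhi_apply] using this
  choose v hvspec using hv
  set t : (J → Bool) → ℝ := fun ε => r / (2 * (‖v ε‖ + 1)) with htdef
  have htpos : ∀ ε, 0 < t ε := by
    intro ε
    apply div_pos hr
    positivity
  -- the convex local sector for each sign pattern
  set U : (J → Bool) → Set (Fin k → ℝ) := fun ε =>
    Metric.ball x r ∩ ⋂ i : J, {y | if ε i then c (i : Fin N) < ∑ m, a (i : Fin N) m * y m
      else (∑ m, a (i : Fin N) m * y m) < c (i : Fin N)} with hUdef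
  have hUconv : ∀ ε, Convex ℝ (U ε) := by
    intro ε
    refine (convex_ball x r).inter (convex_iInter fun i => ?_)
    by_cases h : ε i
    · simp only [h, if_true]
      exact convex_halfSpace_gt (chamberPhi a (i : Fin N)).isLinear _
    · simp only [h, if_false]
      exact convex_halfSpace_lt (chamberPhi a (i : Fin N)).isLinear _
  have hUΩ : ∀ ε, U ε ⊆ Ω := by
    intro ε y hy i
    by_cases hi : i ∈ J
    · have h2 := hy.2
      rw [Set.mem_iInter] at h2
      have h3 := h2 ⟨i, hi⟩
      rw [Set.mem_setOf_eq] at h3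
      by_cases h : ε ⟨i, hi⟩ = true
      · rw [if_pos h] at h3; exact ne_of_gt h3
      · rw [if_neg h] at h3; exact ne_of_lt h3
    · exact hball y hy.1 i hi
  have hsum_smul : ∀ (ε : J → Bool) (s : ℝ) (i : J),
      (∑ m, a (i : Fin N) m * (x + s • v ε) m)
        = c (i : Fin N) + s * (if ε i then 1 else -1) := by
    intro ε s i
    have h2 : (∑ m, a (i : Fin N) m * x m) = c (i : Fin N) := i.2
    have h3 : (∑ m, a (i : Fin N) m * (x + s • v ε) m)
        = (∑ m, a (i : Fin N) m * x m) + s * ∑ m, a (i : Fin N) m * v ε m := by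
      rw [Finset.mul_sum, ← Finset.sum_add_distrib]
      refine Finset.sum_congr rfl fun m _ => ?_
      have : (x + s • v ε) m = x m + s * v ε m := rfl
      rw [this]; ring
    rw [h3, h2, hvspec ε i]
  have hseg : ∀ (ε : J → Bool) (s : ℝ), 0 < s → s ≤ t ε → x + s • v ε ∈ U ε := by
    intro ε s hs hst
    have hnv : (0:ℝ) ≤ ‖v ε‖ := norm_nonneg _
    constructor
    · rw [Metric.mem_ball, dist_eq_norm, add_sub_cancel_left, norm_smul,
        Real.norm_eq_abs, abs_of_pos hs]
      have hden : (0:ℝ) < 2 * (‖v ε‖ + 1) := by positivity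
      have h1 : s * (2 * (‖v ε‖ + 1)) ≤ r := by
        rw [htdef] at hst
        exact (le_div_iff₀ hden).mp hst
      nlinarith
    · rw [Set.mem_iInter]
      intro i
      rw [Set.mem_setOf_eq]
      have hss := hsum_smul ε s i
      by_cases h : ε i = true
      · rw [if_pos h, hss, if_pos h]; linarith
      · rw [if_neg h, hss, if_neg h]; linarith
  set p : (J → Bool) → (Fin k → ℝ) := fun ε => x + t ε • v ε with hpdef
  have hpU : ∀ ε, p ε ∈ U ε := fun ε => hseg ε (t ε) (htpos ε) le_rfl
  have hpΩ : ∀ ε, p ε ∈ Ω := fun ε => hUΩ ε (hpU ε)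
  set g : (J → Bool) → Set (Fin k → ℝ) := fun ε => connectedComponentIn Ω (p ε) with hgdef
  have hUsub : ∀ ε, U ε ⊆ g ε := fun ε =>
    (hUconv ε).isPreconnected.subset_connectedComponentIn (hpU ε) (hUΩ ε)
  -- x is in the closure of each g ε
  have hclos : ∀ ε, x ∈ closure (g ε) := by
    intro ε
    rw [Metric.mem_closure_iff]
    intro δ hδ
    have hnv : (0:ℝ) ≤ ‖v ε‖ := norm_nonneg _
    set s : ℝ := min (t ε) (δ / (‖v ε‖ + 1)) with hsdef
    have hspos : 0 < s := lt_min (htpos ε) (by positivity)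
    refine ⟨x + s • v ε, hUsub ε (hseg ε s hspos (min_le_left _ _)), ?_⟩
    rw [dist_comm, dist_eq_norm, add_sub_cancel_left, norm_smul,
      Real.norm_eq_abs, abs_of_pos hspos]
    have h1 : s ≤ δ / (‖v ε‖ + 1) := min_le_right _ _
    have h2 : s * (‖v ε‖ + 1) ≤ δ := (le_div_iff₀ (by positivity)).mp h1
    nlinarith
  -- sign of each hyperplane form on p ε
  have hsignp : ∀ (ε : J → Bool) (i : J),
      (ε i = true → c (i : Fin N) < ∑ m, a (i : Fin N) m * p ε m) ∧
      (ε i = false → (∑ m, a (i : Fin N) m * p ε m) < c (i : Fin N)) := by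
    intro ε i
    have hss := hsum_smul ε (t ε) i
    have hpe : p ε = x + t ε • v ε := rfl
    rw [← hpe] at hss
    have ht := htpos ε
    constructor
    · intro h; rw [hss, if_pos h]; linarith
    · intro h
      rw [hss, if_neg (by simp [h])]
      linarith
  -- injectivity of g
  have hkey : ∀ ε ε' : J → Bool, g ε = g ε' → ∀ i : J, ε i = true → ε' i = true := by
    intro ε ε' h i hi
    by_contra h'
    have hεi' : ε' i = false := by simpa using h'
    have hmem : p ε' ∈ g ε := by
      rw [h]; exact mem_connectedComponentIn (hpΩ ε')
    have hmem' : p ε ∈ g ε := mem_connectedComponentIn (hpΩ ε)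
    have hne : ∀ y ∈ g ε, (∑ m, a (i : Fin N) m * y m) ≠ c (i : Fin N) := by
      intro y hy
      exact connectedComponentIn_subset Ω (p ε) hy (i : Fin N)
    have h1 : c (i : Fin N) < ∑ m, a (i : Fin N) m * p ε m := (hsignp ε i).1 hi
    have h2 := chamberSign (isPreconnected_connectedComponentIn) (hcont (i : Fin N))
      hne hmem' hmem h1
    have h3 : (∑ m, a (i : Fin N) m * p ε' m) < c (i : Fin N) := (hsignp ε' i).2 hεi'
    linarith
  have hginj : Function.Injective g := by
    intro ε ε' h
    funext i
    cases hb : ε i with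
    | true => exact (hkey ε ε' h i hb).symm
    | false =>
      cases hb' : ε' i with
      | true =>
        have h2 := hkey ε' ε h.symm i hb'
        simp [hb] at h2
      | false => rfl
  -- the target set equals the range of g
  have hTeq : {C : Set (Fin k → ℝ) |
      (∃ y ∈ Ω, C = connectedComponentIn Ω y) ∧ x ∈ closure C} = Set.range g := by
    ext C
    constructor
    · rintro ⟨⟨y0, hy0, rfl⟩, hxcl⟩
      obtain ⟨y1, hy1, hy1d⟩ := Metric.mem_closure_iff.mp hxcl r hr
      have hy1Ω : y1 ∈ Ω := connectedComponentIn_subset Ω y0 hy1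
      set ε : J → Bool := fun i => decide (c (i : Fin N) < ∑ m, a (i : Fin N) m * y1 m)
        with hεdef
      have hy1U : y1 ∈ U ε := by
        constructor
        · rw [Metric.mem_ball, dist_comm]; exact hy1d
        · rw [Set.mem_iInter]
          intro i
          rw [Set.mem_setOf_eq]
          by_cases h : c (i : Fin N) < ∑ m, a (i : Fin N) m * y1 m
          · rw [if_pos (by simp [hεdef, h])]; exact h
          · rw [if_neg (by simp [hεdef, h])]
            exact lt_of_le_of_ne (not_lt.mp h) (hy1Ω (i : Fin N))
      have hUy1 : U ε ⊆ connectedComponentIn Ω y1 :=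
        (hUconv ε).isPreconnected.subset_connectedComponentIn hy1U (hUΩ ε)
      have e1 : connectedComponentIn Ω y0 = connectedComponentIn Ω y1 :=
        connectedComponentIn_eq hy1
      have e2 : connectedComponentIn Ω y1 = connectedComponentIn Ω (p ε) :=
        connectedComponentIn_eq (hUy1 (hpU ε))
      exact ⟨ε, (e1.trans e2).symm⟩
    · rintro ⟨ε, rfl⟩
      exact ⟨⟨p ε, hpΩ ε, rfl⟩, hclos ε⟩
  rw [hΩdef] at hTeq
  rw [hTeq]
  constructor
  · exact Set.finite_range g
  · have h1 : Nat.card (Set.range g) = Nat.card (J → Bool) :=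
      (Nat.card_congr (Equiv.ofInjective g hginj)).symm
    have h2 : Nat.card (J → Bool) = 2 ^ j := by
      rw [Nat.card_fun]
      simp [Nat.card_eq_fintype_card, hcardJ]
    rw [← Nat.card_coe_set_eq]
    exact h1.trans h2
end
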